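/- Let C be a compact convex nonempty subset of ℝⁿ. If A is a nonempty convex subset of ℝⁿ with pA + (1-p)C = C for all p in (0,1) (A adheres to C in the Minkowski convex algebra), then A = C. -/

import Mathlib

open Module Set RealInnerProductSpace

section Aux

variable {E : Type} [NormedAddCommGroup E] [InnerProductSpace ℝ E]

/-- A is contained in C. -/
lemma adh_aux_subset (C A : Set E) (hCcl : IsClosed C) (hCne : C.Nonempty)
    (hadh : ∀ p ∈ Set.Ioo (0:ℝ) 1,
      Set.image2 (fun a c => p • a + (1-p) • c) A C = C) :
    A ⊆ C := by
  intro a ha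
  obtain ⟨c, hc⟩ := hCne
  rw [← hCcl.closure_eq]
  rw [Metric.mem_closure_iff]
  intro ε hε
  set δ : ℝ := min (1/2) (ε / (‖a - c‖ + 1)) with hδdef
  have hδ0 : 0 < δ := lt_min (by norm_num) (div_pos hε (by positivity))
  have hδ1 : δ < 1 := lt_of_le_of_lt (min_le_left _ _) (by norm_num)
  have hp : (1 - δ) ∈ Set.Ioo (0:ℝ) 1 := ⟨by linarith, by linarith⟩
  refine ⟨(1-δ) • a + (1 - (1-δ)) • c, ?_, ?_⟩
  · rw [← hadh _ hp]; exact ⟨a, ha, c, hc, rfl⟩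
  · have : a - ((1-δ) • a + (1 - (1-δ)) • c) = δ • (a - c) := by
      simp only [smul_sub, sub_smul, one_smul]
      abel
    rw [dist_eq_norm, this, norm_smul, Real.norm_eq_abs, abs_of_pos hδ0]
    have h1 : δ ≤ ε / (‖a - c‖ + 1) := min_le_right _ _
    calc δ * ‖a - c‖ ≤ (ε / (‖a - c‖ + 1)) * ‖a - c‖ := by
          exact mul_le_mul_of_nonneg_right h1 (norm_nonneg _)
      _ < ε := by
          rw [div_mul_eq_mul_div, div_lt_iff₀ (by positivity)]
          nlinarith [norm_nonneg (a - c)]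

/-- C is contained in the closure of A. -/
lemma adh_aux_subset_closure (C A : Set E) (hCcp : IsCompact C)
    (hadh : ∀ p ∈ Set.Ioo (0:ℝ) 1,
      Set.image2 (fun a c => p • a + (1-p) • c) A C = C) :
    C ⊆ closure A := by
  intro x hx
  obtain ⟨R, hR⟩ := hCcp.isBounded.subset_closedBall 0
  have hR0 : 0 ≤ R := by
    have := hR hx; simpa [Metric.mem_closedBall] using le_trans dist_nonneg this
  rw [Metric.mem_closure_iff]
  intro ε hε
  set δ : ℝ := min (1/2) (ε / (4 * R + 4)) with hδdef
  have hδ0 : 0 < δ := lt_min (by norm_num) (div_pos hε (by positivity))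
  have hδh : δ ≤ 1/2 := min_le_left _ _
  have hp : (1 - δ) ∈ Set.Ioo (0:ℝ) 1 := ⟨by linarith, by linarith⟩
  have hxC : x ∈ Set.image2 (fun a c => (1-δ) • a + (1 - (1-δ)) • c) A C := by
    rw [hadh _ hp]; exact hx
  obtain ⟨a, ha, c, hc, hacx⟩ := hxC
  refine ⟨a, ha, ?_⟩
  -- x = (1-δ)a + δ c, so (1-δ)(x - a) = δ(c - x), dist x a = (δ/(1-δ)) ‖c - x‖
  have key : (1 - δ) • (x - a) = δ • (c - x) := by
    simp only at hacx
    have h1 : (1 - (1 - δ)) = δ := by ring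
    rw [h1] at hacx
    rw [← hacx]
    module
  have hnx : ‖x‖ ≤ R := by simpa [Metric.mem_closedBall, dist_eq_norm] using hR hx
  have hnc : ‖c‖ ≤ R := by simpa [Metric.mem_closedBall, dist_eq_norm] using hR hc
  have h2 : (1 - δ) * ‖x - a‖ = δ * ‖c - x‖ := by
    have := congrArg norm key
    simpa [norm_smul, Real.norm_eq_abs, abs_of_pos hδ0, abs_of_pos hp.1] using this
  have h3 : ‖c - x‖ ≤ 2 * R := by
    calc ‖c - x‖ ≤ ‖c‖ + ‖x‖ := norm_sub_le _ _
      _ ≤ 2 * R := by linarith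
  have h4 : ‖x - a‖ ≤ 2 * δ * (2 * R) := by
    have h5 : (1-δ) * ‖x - a‖ ≤ δ * (2 * R) :=
      h2 ▸ mul_le_mul_of_nonneg_left h3 hδ0.le
    nlinarith [norm_nonneg (x - a), hp.1]
  rw [dist_eq_norm]
  have hδ2 : δ ≤ ε / (4 * R + 4) := min_le_right _ _
  calc ‖x - a‖ ≤ 2 * δ * (2 * R) := h4
    _ ≤ 2 * (ε / (4 * R + 4)) * (2 * R) := by nlinarith
    _ < ε := by
        have heq : 2 * (ε / (4 * R + 4)) * (2 * R) = ε * (4 * R) / (4 * R + 4) := by ring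
        rw [heq, div_lt_iff₀ (by positivity)]
        nlinarith

end Aux

/-- Main induction: under the adherence hypothesis, `C ⊆ A`. Induction on ambient dimension. -/
lemma adh_aux_main : ∀ (d : ℕ) (E : Type) [NormedAddCommGroup E] [InnerProductSpace ℝ E]
    [FiniteDimensional ℝ E] (C A : Set E), finrank ℝ E ≤ d →
    IsCompact C → Convex ℝ C → Convex ℝ A → A.Nonempty → A ⊆ C →
    (∀ p ∈ Set.Ioo (0:ℝ) 1, Set.image2 (fun a c => p • a + (1-p) • c) A C = C) →
    C ⊆ A := by
  intro d
  induction d with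
  | zero =>
    intro E _ _ _ C A hrank _ _ _ hAne hAC _ x hx
    have hsub : Subsingleton E := by
      rw [← finrank_zero_iff (R := ℝ)]; omega
    obtain ⟨a, ha⟩ := hAne
    rwa [Subsingleton.elim x a]
  | succ d ih =>
    intro E _ _ _ C A hrank hCcp hCcv hAcv hAne hAC hadh x hx
    by_cases hxint : x ∈ interior C
    · -- interior case: x lies in the interior of C, which is contained in A
      have hCclA : C ⊆ closure A := adh_aux_subset_closure C A hCcp hadh
      have hspanC : affineSpan ℝ C = ⊤ :=
        hCcv.interior_nonempty_iff_affineSpan_eq_top.mp ⟨x, hxint⟩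
      have hspanA : affineSpan ℝ A = ⊤ := by
        have h1 : IsClosed (↑(affineSpan ℝ A) : Set E) :=
          (affineSpan ℝ A).closed_of_finiteDimensional
        have h2 : C ⊆ (↑(affineSpan ℝ A) : Set E) := by
          refine hCclA.trans ?_
          rw [← h1.closure_eq]
          exact closure_mono (subset_affineSpan ℝ A)
        exact eq_top_iff.mpr (hspanC ▸ affineSpan_le.2 h2)
      obtain ⟨a₁, ha₁⟩ : (interior A).Nonempty :=
        hAcv.interior_nonempty_iff_affineSpan_eq_top.mpr hspanA
      obtain ⟨r, hr0, hball⟩ := Metric.mem_nhds_iff.mp (mem_interior_iff_mem_nhds.mp hxint)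
      set ε : ℝ := r / (2 * (‖x - a₁‖ + 1)) with hεdef
      have hε0 : 0 < ε := by positivity
      set z : E := x + ε • (x - a₁) with hzdef
      have hzC : z ∈ C := by
        apply hball
        rw [Metric.mem_ball, dist_eq_norm]
        have h3 : z - x = ε • (x - a₁) := by rw [hzdef]; abel
        rw [h3, norm_smul, Real.norm_eq_abs, abs_of_pos hε0, hεdef]
        have hn : (0:ℝ) ≤ ‖x - a₁‖ := norm_nonneg _
        rw [div_mul_eq_mul_div, div_lt_iff₀ (by positivity)]
        nlinarith
      have hzclA : z ∈ closure A := hCclA hzC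
      have h1ε : (0:ℝ) < 1 + ε := by linarith
      have hxcombo : (ε/(1+ε)) • a₁ + (1/(1+ε)) • z = x := by
        rw [hzdef]
        match_scalars <;> field_simp <;> ring
      have hxin : x ∈ interior A := by
        rw [← hxcombo]
        exact hAcv.combo_interior_closure_mem_interior ha₁ hzclA (by positivity)
          (by positivity) (by field_simp <;> ring)
      exact interior_subset hxin
    · -- frontier case: find a supporting functional, pass to the face, induct
      obtain ⟨f, hf0, hfle⟩ : ∃ f : E →L[ℝ] ℝ, f ≠ 0 ∧ ∀ y ∈ C, f y ≤ f x := by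
        by_cases hCint : (interior C).Nonempty
        · obtain ⟨f, hf⟩ := geometric_hahn_banach_open_point hCcv.interior isOpen_interior hxint
          obtain ⟨w, hw⟩ := hCint
          refine ⟨f, ?_, ?_⟩
          · rintro rfl
            simpa using hf w hw
          · intro y hy
            have hev : ∀ k : ℕ, f ((1/((k:ℝ)+1)) • w + (1 - 1/((k:ℝ)+1)) • y) ≤ f x := by
              intro k
              have hk1 : (0:ℝ) < (k:ℝ) + 1 := by positivity
              have hle1 : 1/((k:ℝ)+1) ≤ 1 := by
                rw [div_le_one hk1]; linarith [Nat.cast_nonneg (α := ℝ) k]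
              exact (hf _ (hCcv.combo_interior_closure_mem_interior hw (subset_closure hy)
                (by positivity) (by linarith) (by ring))).le
            have h1 : Filter.Tendsto (fun k : ℕ => 1/((k:ℝ)+1)) Filter.atTop (nhds 0) :=
              tendsto_one_div_add_atTop_nhds_zero_nat
            have h2 : Filter.Tendsto
                (fun k : ℕ => (1/((k:ℝ)+1)) • w + (1 - 1/((k:ℝ)+1)) • y)
                Filter.atTop (nhds ((0:ℝ) • w + ((1:ℝ) - 0) • y)) :=
              (h1.smul_const w).add ((tendsto_const_nhds.sub h1).smul_const y)
            have h3 := (f.continuous.tendsto _).comp h2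
            simp only [Function.comp_def, zero_smul, sub_zero, one_smul, zero_add] at h3
            exact le_of_tendsto h3 (Filter.Eventually.of_forall hev)
        · -- degenerate case: C spans a proper affine subspace
          have hCne : C.Nonempty := hAne.mono hAC
          have hspan : affineSpan ℝ C ≠ ⊤ := fun h =>
            hCint (hCcv.interior_nonempty_iff_affineSpan_eq_top.mpr h)
          have hvs : vectorSpan ℝ C ≠ ⊤ := fun h =>
            hspan ((AffineSubspace.affineSpan_eq_top_iff_vectorSpan_eq_top_of_nonempty
              ℝ E E hCne).mpr h)
          have hob : (vectorSpan ℝ C)ᗮ ≠ ⊥ := by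
            rwa [Ne, Submodule.orthogonal_eq_bot_iff]
          obtain ⟨v, hvmem, hvne⟩ := Submodule.ne_bot_iff _ |>.mp hob
          refine ⟨innerSL ℝ v, ?_, ?_⟩
          · intro h
            have h2 : (inner ℝ v v : ℝ) = 0 := by
              simpa using congrArg (fun g : E →L[ℝ] ℝ => g v) h
            exact hvne (inner_self_eq_zero.mp h2)
          · intro y hy
            have hmem : y - x ∈ vectorSpan ℝ C := by
              simpa [vsub_eq_sub] using vsub_mem_vectorSpan ℝ hy hx
            have h4 : (inner ℝ v (y - x) : ℝ) = 0 := by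
              rw [real_inner_comm]
              exact (Submodule.mem_orthogonal _ _).mp hvmem _ hmem
            have h5 : (inner ℝ v y : ℝ) - (inner ℝ v x : ℝ) = 0 := by rw [← inner_sub_right]; exact h4
            simp only [innerSL_apply_apply]
            linarith
      -- the face F of C at x
      set F : Set E := C ∩ {y | f y = f x} with hFdef
      have hxF : x ∈ F := ⟨hx, rfl⟩
      have hFcp : IsCompact F := hCcp.inter_right (isClosed_eq f.continuous continuous_const)
      have hFcv : Convex ℝ F :=
        hCcv.inter (convex_hyperplane ⟨f.map_add, f.map_smul⟩ (f x))
      have hFadh : ∀ p ∈ Set.Ioo (0:ℝ) 1,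
          Set.image2 (fun a c => p • a + (1-p) • c) (A ∩ F) F = F := by
        intro p hp
        apply Set.Subset.antisymm
        · rintro _ ⟨a, ⟨haA, _, haf⟩, c, ⟨hcC, hcf⟩, rfl⟩
          constructor
          · rw [← hadh p hp]; exact ⟨a, haA, c, hcC, rfl⟩
          · simp only [Set.mem_setOf_eq, map_add, map_smul, smul_eq_mul]
            rw [haf, hcf]; ring
        · rintro y ⟨hyC, hyf⟩
          have hy2 : y ∈ Set.image2 (fun a c => p • a + (1-p) • c) A C := by
            rw [hadh p hp]; exact hyC
          obtain ⟨a, haA, c, hcC, hy⟩ := hy2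
          have hfa : f a ≤ f x := hfle a (hAC haA)
          have hfc : f c ≤ f x := hfle c hcC
          have hfy : p * f a + (1-p) * f c = f x := by
            rw [← hyf, ← hy]
            simp [map_add, map_smul]
          have hp1 : 0 < p := hp.1
          have hp2 : p < 1 := hp.2
          have hfa' : f a = f x := by nlinarith
          have hfc' : f c = f x := by nlinarith
          exact ⟨a, ⟨haA, hAC haA, hfa'⟩, c, ⟨hcC, hfc'⟩, hy⟩
      have hAFne : (A ∩ F).Nonempty := by
        have hx2 : x ∈ Set.image2 (fun a c => (1/2:ℝ) • a + (1-(1/2:ℝ)) • c) (A ∩ F) F := by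
          rw [hFadh (1/2) (by norm_num)]; exact hxF
        obtain ⟨a, ha, _, _, _⟩ := hx2
        exact ⟨a, ha⟩
      -- the kernel of f, as a smaller inner product space
      set S : Submodule ℝ E := LinearMap.ker (f : E →ₗ[ℝ] ℝ) with hSdef
      have hrankS : finrank ℝ S ≤ d := by
        obtain ⟨u, hu⟩ : ∃ u, f u ≠ 0 := by
          by_contra h
          push_neg at h
          exact hf0 (ContinuousLinearMap.ext fun u => by simp [h u])
        have hsurj : LinearMap.range (f : E →ₗ[ℝ] ℝ) = ⊤ := by
          rw [LinearMap.range_eq_top]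
          intro t
          refine ⟨(t / f u) • u, ?_⟩
          simp only [LinearMap.map_smul, smul_eq_mul, ContinuousLinearMap.coe_coe]
          field_simp
        have hre := LinearMap.finrank_range_add_finrank_ker (f : E →ₗ[ℝ] ℝ)
        rw [hsurj, finrank_top] at hre
        have hfr : finrank ℝ ℝ = 1 := finrank_self ℝ
        have hker : LinearMap.ker (f : E →ₗ[ℝ] ℝ) = S := rfl
        rw [hker, hfr] at hre
        omega
      set P := S.orthogonalProjectionOnto with hPdef
      set g : E → S := fun y => P (y - x) with hgdef
      have hkey : ∀ y ∈ F, ((g y : E)) = y - x := by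
        intro y hy
        have hmem : y - x ∈ S := by
          rw [hSdef, LinearMap.mem_ker, map_sub, ContinuousLinearMap.coe_coe, hy.2, sub_self]
        exact Submodule.starProjection_eq_self_iff.mpr hmem
      have hg_comb : ∀ (p : ℝ) (y z : E), g (p • y + (1-p) • z) = p • g y + (1-p) • g z := by
        intro p y z
        have h : (p • y + (1-p) • z) - x = p • (y - x) + (1-p) • (z - x) := by module
        simp only [hgdef, h, map_add, map_smul]
      have hgcont : Continuous g := P.continuous.comp (continuous_id.sub continuous_const)
      set C' : Set S := g '' F with hC'def
      set A' : Set S := g '' (A ∩ F) with hA'def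
      have hC'cp : IsCompact C' := hFcp.image hgcont
      have hC'cv : Convex ℝ C' := by
        rintro _ ⟨y, hy, rfl⟩ _ ⟨z, hz, rfl⟩ t s ht hs hts
        refine ⟨t • y + s • z, hFcv hy hz ht hs hts, ?_⟩
        have hst : s = 1 - t := by linarith
        rw [hst]
        exact hg_comb t y z
      have hA'cv : Convex ℝ A' := by
        rintro _ ⟨y, hy, rfl⟩ _ ⟨z, hz, rfl⟩ t s ht hs hts
        refine ⟨t • y + s • z, (hAcv.inter hFcv) hy hz ht hs hts, ?_⟩
        have hst : s = 1 - t := by linarith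
        rw [hst]
        exact hg_comb t y z
      have hA'sub : A' ⊆ C' := Set.image_mono Set.inter_subset_right
      have hA'ne : A'.Nonempty := hAFne.image g
      have hadh' : ∀ p ∈ Set.Ioo (0:ℝ) 1,
          Set.image2 (fun a c => p • a + (1-p) • c) A' C' = C' := by
        intro p hp
        apply Set.Subset.antisymm
        · rintro _ ⟨_, ⟨a, haAF, rfl⟩, _, ⟨c, hcF, rfl⟩, rfl⟩
          refine ⟨p • a + (1-p) • c, ?_, by simpa using hg_comb p a c⟩
          rw [← hFadh p hp]
          exact ⟨a, haAF, c, hcF, rfl⟩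
        · rintro _ ⟨z, hzF, rfl⟩
          have hz2 : z ∈ Set.image2 (fun a c => p • a + (1-p) • c) (A ∩ F) F := by
            rw [hFadh p hp]; exact hzF
          obtain ⟨a, haAF, c, hcF, rfl⟩ := hz2
          exact ⟨g a, ⟨a, haAF, rfl⟩, g c, ⟨c, hcF, rfl⟩, by simpa using (hg_comb p a c).symm⟩
      have hsub := ih S C' A' hrankS hC'cp hC'cv hA'cv hA'ne hA'sub hadh'
      obtain ⟨a, haAF, hag⟩ := hsub ⟨x, hxF, rfl⟩
      have hax : a = x := by
        have h3 : a - x = x - x := by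
          rw [← hkey a haAF.2, ← hkey x hxF, hag]
        simpa [sub_self, sub_eq_zero] using h3
      exact hax ▸ haAF.1



/-- let `C` be a compact convex nonempty subset of `ℝⁿ`. If `A` is a
nonempty convex subset of `ℝⁿ` with `pA + (1-p)C = C` for all `p ∈ (0,1)` (i.e. `A`
adheres to `C` in the Minkowski convex algebra), then `A = C`. -/
theorem adh_compact_eq {n : ℕ} (C : Set (EuclideanSpace ℝ (Fin n)))
    (hCcp : IsCompact C) (hCcv : Convex ℝ C) (hCne : C.Nonempty)
    (A : Set (EuclideanSpace ℝ (Fin n))) (hAcv : Convex ℝ A) (hAne : A.Nonempty)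
    (hadh : ∀ p ∈ Set.Ioo (0:ℝ) 1,
      Set.image2 (fun a c => p • a + (1-p) • c) A C = C) :
    A = C := by
  have hAC : A ⊆ C := adh_aux_subset C A hCcp.isClosed hCne hadh
  have hCA : C ⊆ A :=
    adh_aux_main (Module.finrank ℝ (EuclideanSpace ℝ (Fin n))) _ C A le_rfl
      hCcp hCcv hAcv hAne hAC hadh
  exact Set.Subset.antisymm hAC hCA
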